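/- Let n ≥ 2 and p ∈ [1, ∞), p ≠ 2. Set ω = exp(2πi/n). If x ∈ ℂⁿ is an invertible element whose norm and whose inverse's norm in F^p(ℤ_n) both equal 1 (where ‖ξ‖_{F^p(ℤ_n)} = ‖u·d(ξ)·u⁻¹‖_{B(ℓᵖ(Fin n))} with u the Fourier matrix), then there exist ζ ∈ S¹ and k ∈ {0, …, n−1} with x = (ζ, ζω^k, ζω^{2k}, …, ζω^{(n−1)k}). In particular, for n ≥ 2 not every element of (S¹)ⁿ has F^p-norm one. -/

import Mathlib

open Real
open scoped BigOperators

/-- The `ℓᵖ` norm on `ι → ℂ` for a real exponent `p`. -/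
noncomputable def pNorm {ι : Type*} [Fintype ι] (p : ℝ) (ξ : ι → ℂ) : ℝ :=
  (∑ i, ‖ξ i‖ ^ p) ^ (1 / p)

/-- The operator norm of a matrix acting on `ℓᵖ(ι)`. -/
noncomputable def opNormLp {ι : Type*} [Fintype ι] (p : ℝ) (M : Matrix ι ι ℂ) : ℝ :=
  sInf {c : ℝ | 0 ≤ c ∧ ∀ ξ : ι → ℂ, pNorm p (M.mulVec ξ) ≤ c * pNorm p ξ}

/-- The primitive `n`-th root of unity `ω = exp(2πi/n)`. -/
noncomputable def dftOmega (n : ℕ) : ℂ := Complex.exp (2 * π * Complex.I / n)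

/-- The `n × n` Fourier matrix, with entries `u_{jk} = ω^{jk} / √n`. -/
noncomputable def dftMatrix (n : ℕ) [NeZero n] : Matrix (ZMod n) (ZMod n) ℂ :=
  Matrix.of fun j k => dftOmega n ^ (j.val * k.val) / (Real.sqrt n : ℂ)

/-- The norm `‖ξ‖_{F^p(ℤ_n)} = ‖u·d(ξ)·u⁻¹‖_{B(ℓᵖ)}` on `ℂⁿ`. -/
noncomputable def FpNorm (n : ℕ) [NeZero n] (p : ℝ) (ξ : ZMod n → ℂ) : ℝ :=
  opNormLp p (dftMatrix n * Matrix.diagonal ξ * (dftMatrix n)⁻¹)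

section AuxLemmas
variable {ι : Type*} [Fintype ι]

variable {ι : Type*} [Fintype ι]

lemma sum_norm_rpow_nonneg (p : ℝ) (ξ : ι → ℂ) : 0 ≤ ∑ i, ‖ξ i‖ ^ p :=
  Finset.sum_nonneg fun i _ => Real.rpow_nonneg (norm_nonneg _) _

lemma pNorm_nonneg (p : ℝ) (ξ : ι → ℂ) : 0 ≤ pNorm p ξ :=
  Real.rpow_nonneg (sum_norm_rpow_nonneg p ξ) _

lemma rpow_rpow_one_div {x p : ℝ} (hx : 0 ≤ x) (hp : p ≠ 0) : (x ^ p) ^ (1/p) = x := by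
  rw [← Real.rpow_mul hx, mul_one_div, div_self hp, Real.rpow_one]

lemma pNorm_pow {p : ℝ} (hp : 0 < p) (ξ : ι → ℂ) : (pNorm p ξ) ^ p = ∑ i, ‖ξ i‖ ^ p := by
  rw [pNorm, ← Real.rpow_mul (sum_norm_rpow_nonneg p ξ), one_div, inv_mul_cancel₀ hp.ne',
    Real.rpow_one]

lemma norm_le_pNorm {p : ℝ} (hp : 1 ≤ p) (ξ : ι → ℂ) (j : ι) : ‖ξ j‖ ≤ pNorm p ξ := by
  have hp0 : (0:ℝ) < p := lt_of_lt_of_le one_pos hp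
  have h1 : ‖ξ j‖ ^ p ≤ ∑ i, ‖ξ i‖ ^ p :=
    Finset.single_le_sum (fun i _ => Real.rpow_nonneg (norm_nonneg _) _) (Finset.mem_univ j)
  calc ‖ξ j‖ = (‖ξ j‖ ^ p) ^ (1/p) := (rpow_rpow_one_div (norm_nonneg _) hp0.ne').symm
    _ ≤ pNorm p ξ := Real.rpow_le_rpow (Real.rpow_nonneg (norm_nonneg _) _) h1 (by positivity)

lemma sum_rpow_le_rpow_sum {p : ℝ} (hp : 1 ≤ p) (f : ι → ℝ) (hf : ∀ i, 0 ≤ f i) :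
    ∑ i, f i ^ p ≤ (∑ i, f i) ^ p := by
  have hp0 : (0:ℝ) < p := lt_of_lt_of_le one_pos hp
  have hS : 0 ≤ ∑ i, f i := Finset.sum_nonneg fun i _ => hf i
  rcases eq_or_lt_of_le hS with h0 | hSpos
  · have hz : ∀ i ∈ Finset.univ, f i = 0 :=
      (Finset.sum_eq_zero_iff_of_nonneg (fun i _ => hf i)).mp h0.symm
    have : ∀ i ∈ (Finset.univ : Finset ι), f i ^ p = 0 := by
      intro i hi; rw [hz i hi, Real.zero_rpow hp0.ne']
    rw [Finset.sum_congr rfl this, Finset.sum_const, smul_zero, ← h0,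
      Real.zero_rpow hp0.ne']
  · have key : ∀ i ∈ (Finset.univ : Finset ι), f i ^ p ≤ f i * (∑ i, f i) ^ (p - 1) := by
      intro i _
      rcases eq_or_lt_of_le (hf i) with h0i | hpos
      · rw [← h0i, Real.zero_rpow hp0.ne', zero_mul]
      · have : f i ^ p = f i * f i ^ (p - 1) := by
          nth_rewrite 1 [show p = 1 + (p - 1) by ring]
          rw [Real.rpow_add hpos, Real.rpow_one]
        rw [this]
        have := Real.rpow_le_rpow (hf i)
          (Finset.single_le_sum (fun i _ => hf i) (Finset.mem_univ i)) (by linarith : 0 ≤ p - 1)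
        exact mul_le_mul_of_nonneg_left this (hf i)
    calc ∑ i, f i ^ p ≤ ∑ i, f i * (∑ i, f i) ^ (p - 1) := Finset.sum_le_sum key
      _ = (∑ i, f i) * (∑ i, f i) ^ (p - 1) := by rw [← Finset.sum_mul]
      _ = (∑ i, f i) ^ p := by
          nth_rewrite 1 [show (∑ i, f i) = (∑ i, f i) ^ (1:ℝ) from (Real.rpow_one _).symm]
          rw [← Real.rpow_add hSpos]; ring_nf
    
lemma pNorm_le_sum_norm {p : ℝ} (hp : 1 ≤ p) (ξ : ι → ℂ) : pNorm p ξ ≤ ∑ i, ‖ξ i‖ := by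
  have hp0 : (0:ℝ) < p := lt_of_lt_of_le one_pos hp
  have hS : 0 ≤ ∑ i, ‖ξ i‖ := Finset.sum_nonneg fun i _ => norm_nonneg _
  calc pNorm p ξ ≤ ((∑ i, ‖ξ i‖) ^ p) ^ (1/p) :=
        Real.rpow_le_rpow (sum_norm_rpow_nonneg p ξ)
          (sum_rpow_le_rpow_sum hp _ fun i => norm_nonneg _) (by positivity)
    _ = ∑ i, ‖ξ i‖ := rpow_rpow_one_div hS hp0.ne'

lemma opNormLp_mem {p : ℝ} (hp : 1 ≤ p) (M : Matrix ι ι ℂ) :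
    0 ≤ opNormLp p M ∧ ∀ ξ : ι → ℂ, pNorm p (M.mulVec ξ) ≤ opNormLp p M * pNorm p ξ := by
  have hclosed : IsClosed {c : ℝ | 0 ≤ c ∧ ∀ ξ : ι → ℂ, pNorm p (M.mulVec ξ) ≤ c * pNorm p ξ} := by
    have : {c : ℝ | 0 ≤ c ∧ ∀ ξ : ι → ℂ, pNorm p (M.mulVec ξ) ≤ c * pNorm p ξ}
        = Set.Ici 0 ∩ ⋂ ξ : ι → ℂ, {c | pNorm p (M.mulVec ξ) ≤ c * pNorm p ξ} := by
      ext c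
      simp only [Set.mem_setOf_eq, Set.mem_inter_iff, Set.mem_Ici, Set.mem_iInter]
    rw [this]
    exact isClosed_Ici.inter (isClosed_iInter fun ξ =>
      isClosed_le continuous_const (continuous_id.mul continuous_const))
  have hne : Set.Nonempty {c : ℝ | 0 ≤ c ∧ ∀ ξ : ι → ℂ, pNorm p (M.mulVec ξ) ≤ c * pNorm p ξ} := by
    refine ⟨∑ i, ∑ j, ‖M i j‖, Finset.sum_nonneg fun i _ =>
      Finset.sum_nonneg fun j _ => norm_nonneg _, fun ξ => ?_⟩
    calc pNorm p (M.mulVec ξ) ≤ ∑ i, ‖M.mulVec ξ i‖ := pNorm_le_sum_norm hp _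
      _ ≤ ∑ i, ∑ j, ‖M i j‖ * pNorm p ξ := by
          refine Finset.sum_le_sum fun i _ => ?_
          refine le_trans (norm_sum_le _ _) (Finset.sum_le_sum fun j _ => ?_)
          rw [norm_mul]
          exact mul_le_mul_of_nonneg_left (norm_le_pNorm hp ξ j) (norm_nonneg _)
      _ = (∑ i, ∑ j, ‖M i j‖) * pNorm p ξ := by
          rw [Finset.sum_mul]; exact Finset.sum_congr rfl fun i _ => (Finset.sum_mul _ _ _).symm
  have hbdd : BddBelow {c : ℝ | 0 ≤ c ∧ ∀ ξ : ι → ℂ, pNorm p (M.mulVec ξ) ≤ c * pNorm p ξ} :=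
    ⟨0, fun c hc => hc.1⟩
  exact hclosed.csInf_mem hne hbdd


end AuxLemmas



-- strict superadditivity for q > 1
lemma rpow_add_gt_of_one_lt {q A B : ℝ} (hq : 1 < q) (hA : 0 < A) (hB : 0 < B) :
    A^q + B^q < (A+B)^q := by
  have hAB : 0 < A + B := by linarith
  have h1 : (A+B)^q = A * (A+B)^(q-1) + B * (A+B)^(q-1) := by
    rw [← add_mul]
    nth_rewrite 1 [show q = 1 + (q-1) by ring]
    rw [Real.rpow_add hAB, Real.rpow_one]
  have hA' : A^q < A * (A+B)^(q-1) := by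
    nth_rewrite 1 [show q = 1 + (q-1) by ring]
    rw [Real.rpow_add hA, Real.rpow_one]
    exact mul_lt_mul_of_pos_left
      (Real.rpow_lt_rpow hA.le (lt_add_of_pos_right A hB) (by linarith)) hA
  have hB' : B^q < B * (A+B)^(q-1) := by
    nth_rewrite 1 [show q = 1 + (q-1) by ring]
    rw [Real.rpow_add hB, Real.rpow_one]
    exact mul_lt_mul_of_pos_left
      (Real.rpow_lt_rpow hB.le (lt_add_of_pos_left B hA) (by linarith)) hB
  rw [h1]; linarith

-- strict subadditivity for q < 1
lemma rpow_add_lt_of_lt_one {q A B : ℝ} (hq0 : 0 < q) (hq1 : q < 1) (hA : 0 < A) (hB : 0 < B) :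
    (A+B)^q < A^q + B^q := by
  have hAB : 0 < A + B := by linarith
  have h1 : (A+B)^q = A * (A+B)^(q-1) + B * (A+B)^(q-1) := by
    rw [← add_mul]
    nth_rewrite 1 [show q = 1 + (q-1) by ring]
    rw [Real.rpow_add hAB, Real.rpow_one]
  have hA' : A * (A+B)^(q-1) < A^q := by
    nth_rewrite 2 [show q = 1 + (q-1) by ring]
    rw [Real.rpow_add hA, Real.rpow_one]
    exact mul_lt_mul_of_pos_left
      (Real.rpow_lt_rpow_of_neg hA (lt_add_of_pos_right A hB) (by linarith)) hA
  have hB' : B * (A+B)^(q-1) < B^q := by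
    nth_rewrite 2 [show q = 1 + (q-1) by ring]
    rw [Real.rpow_add hB, Real.rpow_one]
    exact mul_lt_mul_of_pos_left
      (Real.rpow_lt_rpow_of_neg hB (lt_add_of_pos_left B hA) (by linarith)) hB
  rw [h1]; linarith

lemma rpow_add_le_add_rpow' {q A B : ℝ} (hq0 : 0 < q) (hq1 : q ≤ 1) (hA : 0 ≤ A) (hB : 0 ≤ B) :
    (A+B)^q ≤ A^q + B^q := by
  rcases eq_or_lt_of_le hA with h0 | hA'
  · rw [← h0, zero_add, Real.zero_rpow hq0.ne', zero_add]
  rcases eq_or_lt_of_le hB with h0 | hB'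
  · rw [← h0, add_zero, Real.zero_rpow hq0.ne', add_zero]
  rcases eq_or_lt_of_le hq1 with rfl | hq1'
  · simp [Real.rpow_one]
  exact (rpow_add_lt_of_lt_one hq0 hq1' hA' hB').le

-- power mean inequalities, two variables
lemma mean_rpow_ge {q u v : ℝ} (hq0 : 0 < q) (hq1 : q ≤ 1) (hu : 0 ≤ u) (hv : 0 ≤ v) :
    u^q + v^q ≤ 2 * ((u+v)/2)^q := by
  have hq' : (1:ℝ) ≤ 1/q := by rw [le_div_iff₀ hq0]; linarith
  have h := Real.arith_mean_le_rpow_mean (Finset.univ : Finset (Fin 2)) ![1/2, 1/2] ![u^q, v^q]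
      (by intro i _; fin_cases i <;> norm_num)
      (by simp [Fin.sum_univ_two]; norm_num)
      (by intro i _; fin_cases i <;> simp <;> positivity) hq'
  rw [Fin.sum_univ_two, Fin.sum_univ_two] at h
  simp only [Matrix.cons_val_zero, Matrix.cons_val_one, Matrix.head_cons] at h
  rw [rpow_rpow_one_div hu hq0.ne', rpow_rpow_one_div hv hq0.ne', one_div_one_div] at h
  have h2 : (1/2 * u + 1/2 * v) = (u+v)/2 := by ring
  rw [h2] at h
  linarith

lemma mean_rpow_le {q u v : ℝ} (hq1 : 1 ≤ q) (hu : 0 ≤ u) (hv : 0 ≤ v) :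
    2 * ((u+v)/2)^q ≤ u^q + v^q := by
  have h := Real.rpow_arith_mean_le_arith_mean_rpow (Finset.univ : Finset (Fin 2)) ![1/2, 1/2]
      ![u, v] (by intro i _; fin_cases i <;> norm_num)
      (by simp [Fin.sum_univ_two]; norm_num)
      (by intro i _; fin_cases i <;> simpa) hq1
  rw [Fin.sum_univ_two, Fin.sum_univ_two] at h
  simp only [Matrix.cons_val_zero, Matrix.cons_val_one, Matrix.head_cons] at h
  have h2 : (1/2 * u + 1/2 * v) = (u+v)/2 := by ring
  rw [h2] at h
  linarith

lemma norm_sq_rpow (z : ℂ) {p q : ℝ} (hq : 2 * q = p) : ‖z‖^p = (‖z‖^(2:ℝ))^q := by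
  rw [← Real.rpow_mul (norm_nonneg z), hq]

lemma parallelogram_c (a b : ℂ) :
    ‖a+b‖^(2:ℝ) + ‖a-b‖^(2:ℝ) = 2*(‖a‖^(2:ℝ) + ‖b‖^(2:ℝ)) := by
  have h := parallelogram_law_with_norm ℝ a b
  have h2 : ∀ z : ℂ, ‖z‖^(2:ℝ) = ‖z‖ * ‖z‖ := by
    intro z
    rw [show (2:ℝ) = ((2:ℕ):ℝ) by norm_num, Real.rpow_natCast]; ring
  rw [h2, h2, h2, h2]; linarith

lemma clarkson_lt_two {p : ℝ} (hp : 1 ≤ p) (hplt : p < 2) (a b : ℂ) :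
    ‖a + b‖^p + ‖a - b‖^p ≤ 2*(‖a‖^p + ‖b‖^p) ∧
      (‖a + b‖^p + ‖a - b‖^p = 2*(‖a‖^p + ‖b‖^p) → a = 0 ∨ b = 0) := by
  have hq : 2 * (p/2) = p := by ring
  have hq0 : 0 < p/2 := by linarith
  have hq1 : p/2 < 1 := by linarith
  rw [norm_sq_rpow (a+b) hq, norm_sq_rpow (a-b) hq, norm_sq_rpow a hq, norm_sq_rpow b hq]
  set q := p/2
  set u := ‖a+b‖^(2:ℝ) with hu
  set v := ‖a-b‖^(2:ℝ) with hv
  set A := ‖a‖^(2:ℝ) with hA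
  set B := ‖b‖^(2:ℝ) with hB
  have hu0 : 0 ≤ u := Real.rpow_nonneg (norm_nonneg _) _
  have hv0 : 0 ≤ v := Real.rpow_nonneg (norm_nonneg _) _
  have hA0 : 0 ≤ A := Real.rpow_nonneg (norm_nonneg _) _
  have hB0 : 0 ≤ B := Real.rpow_nonneg (norm_nonneg _) _
  have hpar : (u + v)/2 = A + B := by
    have := parallelogram_c a b; rw [← hu, ← hv, ← hA, ← hB] at this; linarith
  have step1 : u^q + v^q ≤ 2*(A+B)^q := by
    have := mean_rpow_ge hq0 hq1.le hu0 hv0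
    rw [hpar] at this; linarith
  constructor
  · calc u^q + v^q ≤ 2*(A+B)^q := step1
      _ ≤ 2*(A^q + B^q) := by
          have := rpow_add_le_add_rpow' hq0 hq1.le hA0 hB0; linarith
  · intro heq
    by_contra hcon
    push_neg at hcon
    have hApos : 0 < A := Real.rpow_pos_of_pos (norm_pos_iff.mpr hcon.1) _
    have hBpos : 0 < B := Real.rpow_pos_of_pos (norm_pos_iff.mpr hcon.2) _
    have := rpow_add_lt_of_lt_one hq0 hq1 hApos hBpos
    linarith

lemma clarkson_gt_two {p : ℝ} (hp : 2 < p) (a b : ℂ) :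
    2*(‖a‖^p + ‖b‖^p) ≤ ‖a + b‖^p + ‖a - b‖^p ∧
      (‖a + b‖^p + ‖a - b‖^p = 2*(‖a‖^p + ‖b‖^p) → a = 0 ∨ b = 0) := by
  have hq : 2 * (p/2) = p := by ring
  have hq1 : 1 < p/2 := by linarith
  rw [norm_sq_rpow (a+b) hq, norm_sq_rpow (a-b) hq, norm_sq_rpow a hq, norm_sq_rpow b hq]
  set q := p/2
  set u := ‖a+b‖^(2:ℝ) with hu
  set v := ‖a-b‖^(2:ℝ) with hv
  set A := ‖a‖^(2:ℝ) with hA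
  set B := ‖b‖^(2:ℝ) with hB
  have hu0 : 0 ≤ u := Real.rpow_nonneg (norm_nonneg _) _
  have hv0 : 0 ≤ v := Real.rpow_nonneg (norm_nonneg _) _
  have hA0 : 0 ≤ A := Real.rpow_nonneg (norm_nonneg _) _
  have hB0 : 0 ≤ B := Real.rpow_nonneg (norm_nonneg _) _
  have hpar : (u + v)/2 = A + B := by
    have := parallelogram_c a b; rw [← hu, ← hv, ← hA, ← hB] at this; linarith
  have step1 : 2*(A+B)^q ≤ u^q + v^q := by
    have := mean_rpow_le hq1.le hu0 hv0
    rw [hpar] at this; linarith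
  have step2 : A^q + B^q ≤ (A+B)^q := by
    rcases eq_or_lt_of_le hA0 with h0 | hA'
    · rw [← h0, zero_add, Real.zero_rpow (by positivity : q ≠ 0), zero_add]
    rcases eq_or_lt_of_le hB0 with h0 | hB'
    · rw [← h0, add_zero, Real.zero_rpow (by positivity : q ≠ 0), add_zero]
    exact (rpow_add_gt_of_one_lt hq1 hA' hB').le
  constructor
  · linarith
  · intro heq
    by_contra hcon
    push_neg at hcon
    have hApos : 0 < A := Real.rpow_pos_of_pos (norm_pos_iff.mpr hcon.1) _
    have hBpos : 0 < B := Real.rpow_pos_of_pos (norm_pos_iff.mpr hcon.2) _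
    have := rpow_add_gt_of_one_lt hq1 hApos hBpos
    linarith

lemma eq_of_sum_eq_of_le {ι : Type*} [Fintype ι] {f g : ι → ℝ} (hle : ∀ i, f i ≤ g i)
    (h : ∑ i, f i = ∑ i, g i) : ∀ i, f i = g i := by
  have h0 : ∑ i, (g i - f i) = 0 := by rw [Finset.sum_sub_distrib, h, sub_self]
  intro i
  have := (Finset.sum_eq_zero_iff_of_nonneg (fun i _ => sub_nonneg.mpr (hle i))).mp h0 i
    (Finset.mem_univ i)
  linarith

lemma disjoint_of_sum_eq {ι : Type*} [Fintype ι] {p : ℝ} (hp : 1 ≤ p) (hp2 : p ≠ 2)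
    (a b : ι → ℂ)
    (h : ∑ m, (‖a m + b m‖^p + ‖a m - b m‖^p) = ∑ m, 2*(‖a m‖^p + ‖b m‖^p)) :
    ∀ m, a m = 0 ∨ b m = 0 := by
  rcases lt_or_gt_of_ne hp2 with hlt | hgt
  · have key := eq_of_sum_eq_of_le (fun m => (clarkson_lt_two hp hlt (a m) (b m)).1) h
    exact fun m => (clarkson_lt_two hp hlt (a m) (b m)).2 (key m)
  · have key := eq_of_sum_eq_of_le (fun m => (clarkson_gt_two hgt (a m) (b m)).1) h.symm
    exact fun m => (clarkson_gt_two hgt (a m) (b m)).2 (key m).symm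

lemma sum_zmod_eq_sum_range {n : ℕ} [NeZero n] (g : ℕ → ℂ) :
    ∑ j : ZMod n, g j.val = ∑ i ∈ Finset.range n, g i := by
  apply Finset.sum_nbij' (fun j : ZMod n => j.val) (fun i : ℕ => (i : ZMod n))
  · intro a _; exact Finset.mem_range.mpr (ZMod.val_lt a)
  · intro a _; exact Finset.mem_univ _
  · intro a _; exact ZMod.natCast_rightInverse a
  · intro a ha; exact ZMod.val_cast_of_lt (Finset.mem_range.mp ha)
  · intro a _; rfl

lemma FpNorm_one_char (n : ℕ) [NeZero n] (p : ℝ) (hp : 1 ≤ p) (hp2 : p ≠ 2)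
    (x : ZMod n → ℂ) (hx : ∀ j, x j ≠ 0)
    (hxn : FpNorm n p x = 1) (hxi : FpNorm n p (fun j => (x j)⁻¹) = 1) :
    ∃ (ζ : ℂ) (k : ℕ), ‖ζ‖ = 1 ∧ k < n ∧
        ∀ j : ZMod n, x j = ζ * dftOmega n ^ (k * j.val) := by
  have hp0 : (0:ℝ) < p := lt_of_lt_of_le one_pos hp
  have hn0 : n ≠ 0 := NeZero.ne n
  have hnpos : 0 < (n:ℝ) := Nat.cast_pos.mpr (Nat.pos_of_ne_zero hn0)
  set ω := dftOmega n with hω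
  have hprim : IsPrimitiveRoot ω n := Complex.isPrimitiveRoot_exp n hn0
  have hωn : ω ^ n = 1 := hprim.pow_eq_one
  have hmod : ∀ a : ℕ, ω ^ a = ω ^ (a % n) := by
    intro a
    conv_lhs => rw [← Nat.div_add_mod a n]
    rw [pow_add, pow_mul, hωn, one_pow, one_mul]
  set χ : ZMod n → ℂ := fun a => ω ^ a.val with hχ
  have hχmul : ∀ a b : ZMod n, χ (a + b) = χ a * χ b := by
    intro a b
    show ω ^ (a+b).val = ω ^ a.val * ω ^ b.val
    rw [ZMod.val_add, ← hmod, pow_add]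
  have hχpow : ∀ a b : ZMod n, χ (a * b) = ω ^ (a.val * b.val) := by
    intro a b; show ω ^ (a*b).val = _; rw [ZMod.val_mul, ← hmod]
  have hχ0 : χ 0 = 1 := by show ω ^ (0 : ZMod n).val = 1; rw [ZMod.val_zero, pow_zero]
  have hωne : ω ≠ 0 := Complex.exp_ne_zero _
  have hχne : ∀ a, χ a ≠ 0 := fun a => pow_ne_zero _ hωne
  have hχinv : ∀ a, χ (-a) = (χ a)⁻¹ := by
    intro a
    have h1 : χ (-a) * χ a = 1 := by rw [← hχmul, neg_add_cancel, hχ0]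
    exact eq_inv_of_mul_eq_one_left h1
  have horth : ∀ a : ZMod n, ∑ j : ZMod n, χ (j * a) = if a = 0 then (n : ℂ) else 0 := by
    intro a
    by_cases ha : a = 0
    · subst ha
      rw [if_pos rfl]
      have : ∀ j : ZMod n, χ (j * 0) = 1 := by intro j; rw [mul_zero, hχ0]
      rw [Finset.sum_congr rfl fun j _ => this j, Finset.sum_const, Finset.card_univ, ZMod.card]
      simp
    · rw [if_neg ha]
      have hne1 : χ a ≠ 1 := by
        have hpos : 0 < a.val := Nat.pos_of_ne_zero (fun h => ha ((ZMod.val_eq_zero a).mp h))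
        exact hprim.pow_ne_one_of_pos_of_lt hpos.ne' (ZMod.val_lt a)
      have hterm : ∀ j : ZMod n, χ (j * a) = (χ a) ^ j.val := by
        intro j; rw [hχpow, mul_comm, pow_mul]
      rw [Finset.sum_congr rfl (fun j _ => hterm j),
        sum_zmod_eq_sum_range (fun i => (χ a)^i), geom_sum_eq hne1]
      have hχan : (χ a) ^ n = 1 := by
        show (ω ^ a.val) ^ n = 1
        rw [← pow_mul, mul_comm, pow_mul, hωn, one_pow]
      rw [hχan, sub_self, zero_div]
  -- the Fourier matrix and its inverse
  set s : ℂ := (Real.sqrt n : ℂ) with hs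
  have hs2 : s * s = (n : ℂ) := by
    rw [hs, ← Complex.ofReal_mul, Real.mul_self_sqrt (Nat.cast_nonneg n)]
    push_cast; ring
  have hsne : s ≠ 0 := by
    rw [hs]
    exact_mod_cast (Real.sqrt_pos.mpr hnpos).ne'
  have hnC : (n : ℂ) ≠ 0 := Nat.cast_ne_zero.mpr hn0
  set u := dftMatrix n with hu
  have huentry : ∀ j k : ZMod n, u j k = χ (j * k) / s := by
    intro j k
    show dftOmega n ^ (j.val * k.val) / (Real.sqrt n : ℂ) = χ (j * k) / s
    rw [hχpow, ← hω, ← hs]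
  set v : Matrix (ZMod n) (ZMod n) ℂ := Matrix.of (fun j k => χ (-(j * k)) / s) with hv
  have hventry : ∀ j k : ZMod n, v j k = χ (-(j * k)) / s := fun j k => rfl
  have hχa : ∀ (a b j : ZMod n), χ (a*j) * χ (-(j*b)) = χ (j*(a-b)) := by
    intro a b j
    rw [← hχmul]; congr 1; ring
  have huv : u * v = 1 := by
    ext a b
    rw [Matrix.mul_apply]
    have hterm : ∀ j, u a j * v j b = χ (j*(a-b)) / (n:ℂ) := by
      intro j
      rw [huentry, hventry, div_mul_div_comm, hχa, hs2]
    rw [Finset.sum_congr rfl fun j _ => hterm j, ← Finset.sum_div, horth]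
    by_cases hab : a = b
    · subst hab
      rw [if_pos (sub_self a), div_self hnC, Matrix.one_apply_eq]
    · rw [if_neg (sub_ne_zero_of_ne hab), zero_div, Matrix.one_apply_ne hab]
  have hdetu : IsUnit u.det := by
    have h := Matrix.det_mul u v
    rw [huv, Matrix.det_one] at h
    exact IsUnit.of_mul_eq_one _ h.symm
  have huinv : u⁻¹ = v := Matrix.inv_eq_right_inv huv
  set C := u * Matrix.diagonal x * u⁻¹ with hC
  set C' := u * Matrix.diagonal (fun j => (x j)⁻¹) * u⁻¹ with hC'
  have hmulCD : ∀ (d e : ZMod n → ℂ), (u * Matrix.diagonal d * u⁻¹) * (u * Matrix.diagonal e * u⁻¹)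
      = u * Matrix.diagonal (fun j => d j * e j) * u⁻¹ := by
    intro d e
    have h1 : u⁻¹ * u = 1 := Matrix.nonsing_inv_mul u hdetu
    calc (u * Matrix.diagonal d * u⁻¹) * (u * Matrix.diagonal e * u⁻¹)
        = u * (Matrix.diagonal d * ((u⁻¹ * u) * (Matrix.diagonal e * u⁻¹))) := by
          simp only [Matrix.mul_assoc]
      _ = u * (Matrix.diagonal d * Matrix.diagonal e) * u⁻¹ := by
          rw [h1, Matrix.one_mul]; simp only [Matrix.mul_assoc]
      _ = _ := by rw [Matrix.diagonal_mul_diagonal]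
  have hC'C : C' * C = 1 := by
    rw [hC, hC', hmulCD]
    have he : (fun j => (x j)⁻¹ * x j) = fun _ => (1:ℂ) := funext fun j => inv_mul_cancel₀ (hx j)
    rw [he, Matrix.diagonal_one, Matrix.mul_one, Matrix.mul_nonsing_inv u hdetu]
  -- contraction and isometry
  have hxn' : opNormLp p C = 1 := hxn
  have hxi' : opNormLp p C' = 1 := hxi
  have hcon : ∀ ξ, pNorm p (C.mulVec ξ) ≤ pNorm p ξ := by
    intro ξ
    have h := (opNormLp_mem hp C).2 ξ
    rwa [hxn', one_mul] at h
  have hcon' : ∀ ξ, pNorm p (C'.mulVec ξ) ≤ pNorm p ξ := by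
    intro ξ
    have h := (opNormLp_mem hp C').2 ξ
    rwa [hxi', one_mul] at h
  have hiso : ∀ ξ, pNorm p (C.mulVec ξ) = pNorm p ξ := by
    intro ξ
    refine le_antisymm (hcon ξ) ?_
    have h := hcon' (C.mulVec ξ)
    rwa [Matrix.mulVec_mulVec, hC'C, Matrix.one_mulVec] at h
  have hQ : ∀ ξ, ∑ m, ‖C.mulVec ξ m‖^p = ∑ m, ‖ξ m‖^p := by
    intro ξ
    rw [← pNorm_pow hp0, ← pNorm_pow hp0, hiso]
  -- columns
  have hcolvec : ∀ k : ZMod n, C.mulVec (Pi.single k 1) = fun m => C m k := by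
    intro k; funext m; rw [Matrix.mulVec_single]; simp
  have hQsingle : ∀ k : ZMod n, ∑ m, ‖(Pi.single k 1 : ZMod n → ℂ) m‖^p = 1 := by
    intro k
    rw [Finset.sum_eq_single k]
    · simp [Pi.single_eq_same, Real.one_rpow]
    · intro m _ hm; rw [Pi.single_eq_of_ne hm, norm_zero, Real.zero_rpow hp0.ne']
    · simp
  have hcolQ : ∀ k, ∑ m, ‖C m k‖^p = 1 := by
    intro k
    have h1 := hQ (Pi.single k 1)
    rw [hcolvec k, hQsingle k] at h1
    exact h1
  have hdisj : ∀ k l : ZMod n, k ≠ l → ∀ m, C m k = 0 ∨ C m l = 0 := by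
    intro k l hkl
    apply disjoint_of_sum_eq hp hp2 (fun m => C m k) (fun m => C m l)
    have hadd : C.mulVec (Pi.single k 1 + Pi.single l 1) = fun m => C m k + C m l := by
      rw [Matrix.mulVec_add, hcolvec, hcolvec]; rfl
    have hsub : C.mulVec (Pi.single k 1 - Pi.single l 1) = fun m => C m k - C m l := by
      rw [Matrix.mulVec_sub, hcolvec, hcolvec]; rfl
    have hQadd := hQ (Pi.single k 1 + Pi.single l 1)
    have hQsub := hQ (Pi.single k 1 - Pi.single l 1)
    rw [hadd] at hQadd
    rw [hsub] at hQsub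
    have h2 : ∑ m : ZMod n, ‖((Pi.single k 1 + Pi.single l 1 : ZMod n → ℂ)) m‖^p = 2 := by
      have hterm : ∀ m : ZMod n, ‖((Pi.single k 1 + Pi.single l 1 : ZMod n → ℂ)) m‖^p
          = (if m = k then 1 else 0) + (if m = l then 1 else 0) := by
        intro m
        by_cases hmk : m = k
        · subst hmk
          rw [if_pos rfl, if_neg hkl]
          simp [Pi.single_eq_same, Pi.single_eq_of_ne hkl, Real.one_rpow]
        · by_cases hml : m = l
          · subst hml
            rw [if_neg hmk, if_pos rfl]
            simp [Pi.single_eq_same, Pi.single_eq_of_ne hmk, Real.one_rpow]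
          · rw [if_neg hmk, if_neg hml]
            simp [Pi.single_eq_of_ne hmk, Pi.single_eq_of_ne hml,
              Real.zero_rpow hp0.ne']
      rw [Finset.sum_congr rfl fun m _ => hterm m, Finset.sum_add_distrib,
        Finset.sum_ite_eq' Finset.univ k (fun _ => (1:ℝ)),
        Finset.sum_ite_eq' Finset.univ l (fun _ => (1:ℝ))]
      simp; norm_num
    have h3 : ∑ m : ZMod n, ‖((Pi.single k 1 - Pi.single l 1 : ZMod n → ℂ)) m‖^p = 2 := by
      have hterm : ∀ m : ZMod n, ‖((Pi.single k 1 - Pi.single l 1 : ZMod n → ℂ)) m‖^p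
          = (if m = k then 1 else 0) + (if m = l then 1 else 0) := by
        intro m
        by_cases hmk : m = k
        · subst hmk
          rw [if_pos rfl, if_neg hkl]
          simp [Pi.single_eq_same, Pi.single_eq_of_ne hkl, Real.one_rpow]
        · by_cases hml : m = l
          · subst hml
            rw [if_neg hmk, if_pos rfl]
            simp [Pi.single_eq_same, Pi.single_eq_of_ne hmk, Real.one_rpow]
          · rw [if_neg hmk, if_neg hml]
            simp [Pi.single_eq_of_ne hmk, Pi.single_eq_of_ne hml,
              Real.zero_rpow hp0.ne']
      rw [Finset.sum_congr rfl fun m _ => hterm m, Finset.sum_add_distrib,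
        Finset.sum_ite_eq' Finset.univ k (fun _ => (1:ℝ)),
        Finset.sum_ite_eq' Finset.univ l (fun _ => (1:ℝ))]
      simp; norm_num
    rw [h2] at hQadd
    rw [h3] at hQsub
    have hck := hcolQ k
    have hcl := hcolQ l
    have hrw : ∀ m : ZMod n, 2*(‖C m k‖^p + ‖C m l‖^p) = 2*‖C m k‖^p + 2*‖C m l‖^p := by
      intro m; ring
    rw [Finset.sum_add_distrib, hQadd, hQsub,
      Finset.sum_congr rfl fun m _ => hrw m, Finset.sum_add_distrib,
      ← Finset.mul_sum, ← Finset.mul_sum, hck, hcl]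
    norm_num
  -- circulant structure
  set c : ZMod n → ℂ := fun r => (∑ j, x j * χ (j * r)) / n with hcdef
  have hCentry : ∀ m k : ZMod n, C m k = c (m - k) := by
    intro m k
    have h1 : C m k = ∑ j, u m j * (x j * v j k) := by
      rw [hC, huinv, Matrix.mul_assoc, Matrix.mul_apply]
      congr 1; funext j
      rw [Matrix.diagonal_mul]
    have h2 : ∀ j, u m j * (x j * v j k) = x j * χ (j*(m-k)) / (n:ℂ) := by
      intro j
      rw [huentry, hventry]
      calc χ (m*j)/s * (x j * (χ (-(j*k))/s)) = x j * (χ (m*j) * χ (-(j*k))) / (s*s) := by ring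
        _ = x j * χ (j*(m-k)) / (n:ℂ) := by rw [hχa, hs2]
    rw [h1, Finset.sum_congr rfl fun j _ => h2 j, ← Finset.sum_div]
  have hrex : ∃ r, c r ≠ 0 := by
    by_contra hall
    push_neg at hall
    have h1 := hcolQ 0
    have h2 : ∀ m ∈ (Finset.univ : Finset (ZMod n)), ‖C m 0‖^p = 0 := by
      intro m _
      rw [hCentry, sub_zero, hall m, norm_zero, Real.zero_rpow hp0.ne']
    rw [Finset.sum_congr rfl h2, Finset.sum_const, smul_zero] at h1
    norm_num at h1
  obtain ⟨r, hrne⟩ := hrex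
  have hzero : ∀ t, t ≠ r → c t = 0 := by
    intro t ht
    have hkl : (0 : ZMod n) ≠ r - t := by
      intro h
      apply ht
      have := h.symm
      rw [sub_eq_zero] at this
      exact this.symm
    have h := hdisj 0 (r - t) hkl r
    rw [hCentry, hCentry, sub_zero, sub_sub_cancel] at h
    rcases h with h | h
    · exact absurd h hrne
    · exact h
  have hcr1 : ‖c r‖ = 1 := by
    have h1 := hcolQ 0
    have h2 : ∑ m : ZMod n, ‖C m 0‖^p = ‖c r‖^p := by
      rw [Finset.sum_eq_single r]
      · rw [hCentry, sub_zero]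
      · intro m _ hm
        rw [hCentry, sub_zero, hzero m hm, norm_zero, Real.zero_rpow hp0.ne']
      · simp
    rw [h2] at h1
    calc ‖c r‖ = (‖c r‖ ^ p) ^ (1/p) := (rpow_rpow_one_div (norm_nonneg _) hp0.ne').symm
      _ = 1 := by rw [h1, Real.one_rpow]
  have hCu : C * u = u * Matrix.diagonal x := by
    rw [hC, Matrix.mul_assoc, Matrix.nonsing_inv_mul u hdetu, Matrix.mul_one]
  have hxk : ∀ k : ZMod n, x k = c r * χ ((-r) * k) := by
    intro k
    have h1 := congrFun (congrFun hCu r) k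
    rw [Matrix.mul_apply, Matrix.mul_diagonal] at h1
    have h2 : ∑ m, C r m * u m k = c r / s := by
      rw [Finset.sum_eq_single (0 : ZMod n)]
      · rw [hCentry, sub_zero, huentry, zero_mul, hχ0, mul_one_div]
      · intro m _ hm0
        have : r - m ≠ r := by
          intro h
          apply hm0
          have := sub_eq_self.mp h
          exact this
        rw [hCentry, hzero (r - m) this, zero_mul]
      · simp
    rw [h2, huentry] at h1
    -- h1 : c r / s = χ (r * k) / s * x k
    have h3 : c r = χ (r * k) * x k := by
      field_simp at h1
      linear_combination h1
    have h4 : χ ((-r) * k) = (χ (r*k))⁻¹ := by rw [neg_mul, hχinv]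
    rw [h4, h3, mul_comm (χ (r*k)) (x k), mul_assoc, mul_inv_cancel₀ (hχne _), mul_one]
  refine ⟨c r, (-r).val, hcr1, ZMod.val_lt _, fun j => ?_⟩
  rw [hxk j]
  congr 1
  rw [← hχpow]

/-- For `n ≥ 2` and `p ≠ 2`: if `x ∈ ℂⁿ` is invertible with `‖x‖_{F^p(ℤ_n)} = 1`
and `‖x⁻¹‖_{F^p(ℤ_n)} = 1`, then `x = (ζ, ζω^k, …, ζω^{(n−1)k})` for some
`ζ ∈ S¹` and `0 ≤ k < n`. In particular not every element of `(S¹)ⁿ` has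
`F^p`-norm one. -/
theorem stmt19 (n : ℕ) [NeZero n] (hn : 2 ≤ n) (p : ℝ) (hp : 1 ≤ p) (hp2 : p ≠ 2)
    (x : ZMod n → ℂ) (hx : ∀ j, x j ≠ 0)
    (hxn : FpNorm n p x = 1)
    (hxi : FpNorm n p (fun j => (x j)⁻¹) = 1) :
    (∃ (ζ : ℂ) (k : ℕ), ‖ζ‖ = 1 ∧ k < n ∧
        ∀ j : ZMod n, x j = ζ * dftOmega n ^ (k * j.val)) ∧
    ∃ y : ZMod n → ℂ, (∀ j, ‖y j‖ = 1) ∧ FpNorm n p y ≠ 1 := by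
  haveI : Fact (1 < n) := ⟨by omega⟩
  constructor
  · exact FpNorm_one_char n p hp hp2 x hx hxn hxi
  · by_contra hAll
    push_neg at hAll
    set y : ZMod n → ℂ := fun j => if j = 1 then Complex.I else 1 with hy
    have hy1 : ∀ j, ‖y j‖ = 1 := by
      intro j
      by_cases h : j = 1 <;> simp [hy, h]
    have hyne : ∀ j, y j ≠ 0 := by
      intro j h
      have h1 := hy1 j
      rw [h, norm_zero] at h1
      norm_num at h1
    have hyinv : ∀ j, ‖(y j)⁻¹‖ = 1 := by
      intro j; rw [norm_inv, hy1]; norm_num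
    obtain ⟨ζ, k, hζ, hk, hform⟩ :=
      FpNorm_one_char n p hp hp2 y hyne (hAll y hy1) (hAll _ hyinv)
    have h01 : (0 : ZMod n) ≠ 1 := zero_ne_one
    have hζ1 : ζ = 1 := by
      have h := hform 0
      rw [ZMod.val_zero, mul_zero, pow_zero, mul_one] at h
      have hy0 : y 0 = 1 := by simp [hy, h01]
      rw [hy0] at h
      exact h.symm
    have hIk : dftOmega n ^ k = Complex.I := by
      have h := hform 1
      have hv1 : (1 : ZMod n).val = 1 := ZMod.val_one n
      rw [hv1, mul_one, hζ1, one_mul] at h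
      have hy1' : y 1 = Complex.I := by simp [hy]
      rw [hy1'] at h
      exact h.symm
    have hsq : dftOmega n ^ (2 * k) = -1 := by
      rw [mul_comm, pow_mul, hIk, Complex.I_sq]
    rcases eq_or_lt_of_le hn with h2 | h3
    · -- n = 2
      have hωn : dftOmega n ^ n = 1 :=
        (Complex.isPrimitiveRoot_exp n (by omega)).pow_eq_one
      have hone : dftOmega n ^ (2 * k) = 1 := by
        rw [pow_mul, h2, hωn, one_pow]
      have hbad := hsq.symm.trans hone
      norm_num at hbad
    · -- 2 < n
      have h21 : (2 : ZMod n) ≠ 1 := by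
        intro h
        have hv2 : (2 : ZMod n).val = 2 := by
          rw [show (2 : ZMod n) = ((2:ℕ) : ZMod n) by push_cast; ring]
          exact ZMod.val_cast_of_lt h3
        rw [h, ZMod.val_one n] at hv2
        norm_num at hv2
      have hv2 : (2 : ZMod n).val = 2 := by
        rw [show (2 : ZMod n) = ((2:ℕ) : ZMod n) by push_cast; ring]
        exact ZMod.val_cast_of_lt h3
      have h := hform 2
      rw [hv2, hζ1, one_mul, mul_comm k 2, hsq] at h
      have hy2 : y 2 = 1 := by simp [hy, h21]
      rw [hy2] at h
      norm_num at h
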